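/- If (λ, v) with v = (x; y; z) ∈ ℂ^{n+m+l}, v ≠ 0, is an eigenpair of the iteration matrix G_{α,β} = I − P⁻¹𝓑 and λ ≠ 0, then y ≠ 0. -/

import Mathlib

open Matrix

/-- The double saddle point matrix 𝓑 = [[A, Bᵀ, 0], [−B, 0, −Cᵀ], [0, C, 0]]. -/
def calB {n m l : ℕ} (A : Matrix (Fin n) (Fin n) ℝ) (B : Matrix (Fin m) (Fin n) ℝ)
    (C : Matrix (Fin l) (Fin m) ℝ) :
    Matrix ((Fin n ⊕ Fin m) ⊕ Fin l) ((Fin n ⊕ Fin m) ⊕ Fin l) ℝ :=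
  fromBlocks (fromBlocks A Bᵀ (-B) 0) (fromRows 0 (-Cᵀ)) (fromCols 0 C) 0

/-- The block upper triangular preconditioner
`P = [[A, Bᵀ, 0], [0, αI + βBBᵀ, −Cᵀ], [0, 0, αI + βCCᵀ]]`. -/
def precondP {n m l : ℕ} (α β : ℝ) (A : Matrix (Fin n) (Fin n) ℝ)
    (B : Matrix (Fin m) (Fin n) ℝ) (C : Matrix (Fin l) (Fin m) ℝ) :
    Matrix ((Fin n ⊕ Fin m) ⊕ Fin l) ((Fin n ⊕ Fin m) ⊕ Fin l) ℝ :=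
  fromBlocks
    (fromBlocks A Bᵀ 0 (α • (1 : Matrix (Fin m) (Fin m) ℝ) + β • (B * Bᵀ)))
    (fromRows 0 (-Cᵀ)) 0 (α • (1 : Matrix (Fin l) (Fin l) ℝ) + β • (C * Cᵀ))

/-- The iteration matrix `G_{α,β} = I − P⁻¹ 𝓑`. -/
noncomputable def iterG {n m l : ℕ} (α β : ℝ) (A : Matrix (Fin n) (Fin n) ℝ)
    (B : Matrix (Fin m) (Fin n) ℝ) (C : Matrix (Fin l) (Fin m) ℝ) :
    Matrix ((Fin n ⊕ Fin m) ⊕ Fin l) ((Fin n ⊕ Fin m) ⊕ Fin l) ℝ :=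
  1 - (precondP α β A B C)⁻¹ * calB A B C

section aux

lemma auxSmulOneAddPosDef {k : ℕ} {α β : ℝ} (hα : 0 < α) (hβ : 0 < β)
    {M : Matrix (Fin k) (Fin k) ℝ} (hM : M.PosSemidef) :
    (α • (1 : Matrix (Fin k) (Fin k) ℝ) + β • M).PosDef := by
  refine posDef_iff_dotProduct_mulVec.mpr ⟨?_, ?_⟩
  · unfold Matrix.IsHermitian
    rw [conjTranspose_add, conjTranspose_smul, conjTranspose_smul, conjTranspose_one, hM.1.eq]
    simp
  · intro x hx
    rw [add_mulVec, dotProduct_add, smul_mulVec, smul_mulVec, one_mulVec,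
      dotProduct_smul, dotProduct_smul]
    exact add_pos_of_pos_of_nonneg (smul_pos hα (dotProduct_star_self_pos_iff.mpr hx))
      (smul_nonneg hβ.le (hM.dotProduct_mulVec_nonneg x))

lemma auxRankIsUnit {k : ℕ} {M : Matrix (Fin k) (Fin k) ℝ} (h : M.rank = k) : IsUnit M := by
  rw [← Matrix.mulVec_surjective_iff_isUnit]
  have hr : LinearMap.range M.mulVecLin = ⊤ := by
    apply Submodule.eq_top_of_finrank_eq
    simpa [Matrix.rank] using h
  intro w
  exact (LinearMap.range_eq_top.mp hr) w

lemma auxIsUnitMap {k : ℕ} {M : Matrix (Fin k) (Fin k) ℝ} (h : IsUnit M) :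
    IsUnit (M.map Complex.ofReal) := by
  rw [Matrix.isUnit_iff_isUnit_det] at h ⊢
  have hd : (M.map Complex.ofReal).det = Complex.ofReal M.det := by
    have := (RingHom.map_det Complex.ofRealHom M).symm
    rwa [RingHom.mapMatrix_apply] at this
  rw [hd, isUnit_iff_ne_zero]
  simpa using (isUnit_iff_ne_zero.mp h)

lemma auxFromRowsMap {m₁ m₂ n : ℕ} (f : ℝ → ℂ) (A₁ : Matrix (Fin m₁) (Fin n) ℝ)
    (A₂ : Matrix (Fin m₂) (Fin n) ℝ) :
    (fromRows A₁ A₂).map f = fromRows (A₁.map f) (A₂.map f) := by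
  ext (i | i) j <;> rfl

lemma auxFromColumnsMap {m n₁ n₂ : ℕ} (f : ℝ → ℂ) (A₁ : Matrix (Fin m) (Fin n₁) ℝ)
    (A₂ : Matrix (Fin m) (Fin n₂) ℝ) :
    (fromCols A₁ A₂).map f = fromCols (A₁.map f) (A₂.map f) := by
  ext i (j | j) <;> rfl

end aux

/-- If `(λ, v)` with `v = (x; y; z) ≠ 0` is an eigenpair of the iteration matrix
`G_{α,β} = I − P⁻¹𝓑` and `λ ≠ 0`, then `y ≠ 0`. -/
theorem eigenvector_second_component_ne_zero {n m l : ℕ} (α β : ℝ)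
    (A : Matrix (Fin n) (Fin n) ℝ) (B : Matrix (Fin m) (Fin n) ℝ)
    (C : Matrix (Fin l) (Fin m) ℝ)
    (hA : A.PosDef) (hB : B.rank = m) (hC : C.rank = l) (hnm : m ≤ n) (hml : l ≤ m)
    (hα : 0 < α) (hβ : 0 < β)
    (lam : ℂ) (x : Fin n → ℂ) (y : Fin m → ℂ) (z : Fin l → ℂ)
    (hv : Sum.elim (Sum.elim x y) z ≠ 0)
    (heig : ((iterG α β A B C).map Complex.ofReal).mulVec (Sum.elim (Sum.elim x y) z) =
      lam • Sum.elim (Sum.elim x y) z)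
    (hlam : lam ≠ 0) :
    y ≠ 0 := by
  intro hy
  subst hy
  unfold iterG at heig
  set Bm := calB A B C with hBmdef
  set P := precondP α β A B C with hPdef
  set v := Sum.elim (Sum.elim x (0 : Fin m → ℂ)) z with hvdef
  set f := Complex.ofReal with hfdef
  set A' := A.map f with hA'
  set B' := B.map f with hB'
  set C' := C.map f with hC'
  set S1 := α • (1 : Matrix (Fin m) (Fin m) ℝ) + β • (B * Bᵀ) with hS1def
  set S2 := α • (1 : Matrix (Fin l) (Fin l) ℝ) + β • (C * Cᵀ) with hS2def
  -- positive definiteness facts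
  have hBBt : (B * Bᵀ).PosSemidef := by
    have := Matrix.posSemidef_self_mul_conjTranspose B
    rwa [conjTranspose_eq_transpose_of_trivial] at this
  have hCCt : (C * Cᵀ).PosSemidef := by
    have := Matrix.posSemidef_self_mul_conjTranspose C
    rwa [conjTranspose_eq_transpose_of_trivial] at this
  have hS1 : S1.PosDef := auxSmulOneAddPosDef hα hβ hBBt
  have hS2 : S2.PosDef := auxSmulOneAddPosDef hα hβ hCCt
  have hPdetUnit : IsUnit P.det := by
    rw [hPdef]
    unfold precondP
    rw [det_fromBlocks_zero₂₁, det_fromBlocks_zero₂₁]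
    exact (hA.det_pos.ne'.isUnit.mul hS1.det_pos.ne'.isUnit).mul hS2.det_pos.ne'.isUnit
  -- rearrange the eigen equation
  have h1 : ((P⁻¹ * Bm).map f) *ᵥ v = (1 - lam) • v := by
    rw [Matrix.map_sub _ (fun a b => Complex.ofReal_sub a b),
      Matrix.map_one _ Complex.ofReal_zero Complex.ofReal_one,
      Matrix.sub_mulVec, Matrix.one_mulVec] at heig
    have h' : ((P⁻¹ * Bm).map f) *ᵥ v = v - lam • v := by
      rw [← heig]; abel
    rw [h', sub_smul, one_smul]
  have hkey : Bm.map f *ᵥ v = (1 - lam) • ((P.map f) *ᵥ v) := by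
    have h2 := congrArg (fun u => (P.map f) *ᵥ u) h1
    simp only [Matrix.mulVec_mulVec, Matrix.mulVec_smul] at h2
    have hmm : (P.map f) * ((P⁻¹ * Bm).map f) = Bm.map f := by
      have hh : P.map f * (P⁻¹ * Bm).map f = (P * (P⁻¹ * Bm)).map Complex.ofRealHom :=
        (Matrix.map_mul (f := Complex.ofRealHom)).symm
      rw [hh, ← Matrix.mul_assoc, Matrix.mul_nonsing_inv _ hPdetUnit, Matrix.one_mul]
      rfl
    rwa [hmm] at h2
  -- block structure of the mapped matrices
  have hBmmap : Bm.map f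
      = fromBlocks (fromBlocks A' B'ᵀ (-B') 0) (fromRows 0 (-C'ᵀ)) (fromCols 0 C') 0 := by
    rw [hBmdef]
    unfold calB
    rw [fromBlocks_map, fromBlocks_map, auxFromRowsMap, auxFromColumnsMap]
    ext ((i | i) | i) ((j | j) | j) <;> simp [hA', hB', hC', hfdef]
  have hPmap : P.map f
      = fromBlocks (fromBlocks A' B'ᵀ 0 (S1.map f)) (fromRows 0 (-C'ᵀ)) 0 (S2.map f) := by
    rw [hPdef]
    unfold precondP
    rw [fromBlocks_map, fromBlocks_map, auxFromRowsMap]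
    ext ((i | i) | i) ((j | j) | j) <;> simp [hA', hB', hC', hS1def, hS2def, hfdef]
  have hLeft : Bm.map f *ᵥ v = Sum.elim (Sum.elim (A' *ᵥ x) ((-B') *ᵥ x + (-C'ᵀ) *ᵥ z)) 0 := by
    rw [hBmmap, hvdef, fromBlocks_mulVec]
    simp only [Sum.elim_comp_inl, Sum.elim_comp_inr]
    rw [fromBlocks_mulVec, fromRows_mulVec, fromCols_mulVec_sumElim]
    funext i
    rcases i with (i | i) | i <;> simp
  have hRight : P.map f *ᵥ v
      = Sum.elim (Sum.elim (A' *ᵥ x) ((-C'ᵀ) *ᵥ z)) ((S2.map f) *ᵥ z) := by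
    rw [hPmap, hvdef, fromBlocks_mulVec]
    simp only [Sum.elim_comp_inl, Sum.elim_comp_inr]
    rw [fromBlocks_mulVec, fromRows_mulVec]
    funext i
    rcases i with (i | i) | i <;> simp
  have hEq : Sum.elim (Sum.elim (A' *ᵥ x) ((-B') *ᵥ x + (-C'ᵀ) *ᵥ z)) (0 : Fin l → ℂ)
      = (1 - lam) • Sum.elim (Sum.elim (A' *ᵥ x) ((-C'ᵀ) *ᵥ z)) ((S2.map f) *ᵥ z) := by
    rw [← hLeft, ← hRight]; exact hkey
  -- first component : x = 0
  have eq1 : A' *ᵥ x = (1 - lam) • (A' *ᵥ x) := by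
    funext i
    simpa using congrFun hEq (Sum.inl (Sum.inl i))
  have hAx : lam • (A' *ᵥ x) = 0 := by
    rw [sub_smul, one_smul] at eq1
    exact sub_eq_self.mp eq1.symm
  have hAx0 : A' *ᵥ x = 0 := (smul_eq_zero.mp hAx).resolve_left hlam
  have hx0 : x = 0 := by
    have hinj := Matrix.mulVec_injective_iff_isUnit.mpr (auxIsUnitMap hA.isUnit)
    apply hinj
    rw [hAx0, Matrix.mulVec_zero]
  -- second component : z = 0
  have eq2 : (-B') *ᵥ x + (-C'ᵀ) *ᵥ z = (1 - lam) • ((-C'ᵀ) *ᵥ z) := by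
    funext i
    simpa using congrFun hEq (Sum.inl (Sum.inr i))
  have eq2' : (-C'ᵀ) *ᵥ z = (1 - lam) • ((-C'ᵀ) *ᵥ z) := by
    rw [hx0] at eq2
    simpa using eq2
  have hCz' : lam • ((-C'ᵀ) *ᵥ z) = 0 := by
    rw [sub_smul, one_smul] at eq2'
    exact sub_eq_self.mp eq2'.symm
  have hCz : C'ᵀ *ᵥ z = 0 := by
    have h0 := (smul_eq_zero.mp hCz').resolve_left hlam
    rwa [Matrix.neg_mulVec, neg_eq_zero] at h0
  have hCCtz : ((C * Cᵀ).map f) *ᵥ z = 0 := by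
    have hmap : (C * Cᵀ).map f = C' * C'ᵀ := by
      have hh : (C * Cᵀ).map f = (C * Cᵀ).map Complex.ofRealHom := rfl
      rw [hh, Matrix.map_mul]
      rfl
    rw [hmap, ← Matrix.mulVec_mulVec, hCz, Matrix.mulVec_zero]
  have hz0 : z = 0 := by
    have hunit : IsUnit ((C * Cᵀ).map f) := by
      apply auxIsUnitMap
      apply auxRankIsUnit
      rw [Matrix.rank_self_mul_transpose]
      exact hC
    have hinj := Matrix.mulVec_injective_iff_isUnit.mpr hunit
    apply hinj
    rw [hCCtz, Matrix.mulVec_zero]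
  apply hv
  rw [hvdef, hx0, hz0]
  funext i
  rcases i with (i | i) | i <;> simp
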